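/- Let R be a ring and F : (ModuleCat R)ᵒᵖ ⥤ Ab an additive contravariant functor that is half-exact. Let B be an R-module with projective resolution ⋯ → P₁ → P₀ → B → 0, and for j ≥ 1 let ΩʲB denote the j-th syzygy (Ω⁰B = B, ΩʲB = ker(Pⱼ₋₁ ↠ Ωʲ⁻¹B)), with canonical epimorphisms Pⱼ ↠ ΩʲB and monomorphisms ΩʲB ↪ Pⱼ₋₁. Then the long sequence of abelian groups 0 → ker(F(B) → F(P₀)) → F(B) → H⁰(F(P_•)) → ker(F(ΩB) → F(P₁)) → coker(F(P₀) → F(ΩB)) → H¹(F(P_•)) → ker(F(Ω²B) → F(P₂)) → coker(F(P₁) → F(Ω²B)) → H²(F(P_•)) → ⋯, where Hʲ(F(P_•)) is the cohomology of the cochain complex F(P₀) → F(P₁) → ⋯ at F(Pⱼ), the map F(B) → F(P₀) is induced by the epimorphism P₀ ↠ B, the maps F(ΩʲB) → F(Pⱼ) are induced by the epimorphisms Pⱼ ↠ ΩʲB, the maps F(Pⱼ₋₁) → F(ΩʲB) are induced by the monomorphisms ΩʲB ↪ Pⱼ₋₁, and the remaining maps are the canonically induced ones, is exact. -/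

import Mathlib

open CategoryTheory Limits Opposite

set_option linter.unusedSectionVars false

namespace ContraRightFundamentalSeq

universe u v w

/-- The data of a projective resolution `⋯ → P₁ → P₀ → B → 0` of the module `B = S 0`
together with its syzygies `S j = Ωʲ B`, encoded by composable pairs
`Ωʲ⁺¹ B →(m j) Pⱼ →(p j) Ωʲ B` with `m j ≫ p j = 0` (each such pair is required to be a
short exact sequence in the main theorem). -/
structure SyzygyData (R : Type u) [Ring R] where
  /-- the syzygy modules, `S 0` being the given module `B` -/
  S : ℕ → ModuleCat.{v} R
  /-- the modules of the projective resolution -/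
  P : ℕ → ModuleCat.{v} R
  /-- the canonical monomorphisms `Ωʲ⁺¹ B ↪ Pⱼ` -/
  m : ∀ j, S (j + 1) ⟶ P j
  /-- the canonical epimorphisms `Pⱼ ↠ Ωʲ B` -/
  p : ∀ j, P j ⟶ S j
  wmp : ∀ j, m j ≫ p j = 0

variable {R : Type u} [Ring R]
variable (F : (ModuleCat.{v} R)ᵒᵖ ⥤ AddCommGrpCat.{w}) [F.Additive] (D : SyzygyData.{u, v} R)

namespace SyzygyData

/-- The differential `Pⱼ⁺¹ ⟶ Pⱼ` of the projective resolution. -/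
def d (j : ℕ) : D.P (j + 1) ⟶ D.P j := D.p (j + 1) ≫ D.m j

end SyzygyData

/-- `K j = ker (F(Ωʲ B) → F(Pⱼ))`, induced by the epimorphism `Pⱼ ↠ Ωʲ B`
(for `j = 0` this is `ker (F(B) → F(P₀))`). -/
noncomputable def K (j : ℕ) : AddCommGrpCat.{w} := kernel (F.map (D.p j).op)

/-- `Cok j = coker (F(Pⱼ) → F(Ωʲ⁺¹ B))`, induced by the monomorphism `Ωʲ⁺¹ B ↪ Pⱼ`. -/
noncomputable def Cok (j : ℕ) : AddCommGrpCat.{w} := cokernel (F.map (D.m j).op)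

/-- The `j`-cocycles `Z j = ker (F(Pⱼ) → F(Pⱼ₊₁))` of the cochain complex `F(P_•)`. -/
noncomputable def Z (j : ℕ) : AddCommGrpCat.{w} := kernel (F.map (D.d j).op)

/-- The canonical map `F(Ωʲ B) ⟶ Z j`. -/
noncomputable def s (j : ℕ) : F.obj (op (D.S j)) ⟶ Z F D j :=
  kernel.lift _ (F.map (D.p j).op) (by
    erw [← F.map_comp]
    show F.map ((D.p (j + 1) ≫ D.m j ≫ D.p j).op) = 0
    erw [D.wmp j, comp_zero]
    exact F.map_zero _ _)

/-- The lift `ℓ j : F(Pⱼ) ⟶ Z (j+1)` of the cochain differential. -/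
noncomputable def l (j : ℕ) : F.obj (op (D.P j)) ⟶ Z F D (j + 1) :=
  kernel.lift _ (F.map (D.d j).op) (by
    erw [← F.map_comp]
    show F.map ((D.p (j + 2) ≫ (D.m (j + 1) ≫ D.p (j + 1)) ≫ D.m j).op) = 0
    erw [D.wmp (j + 1), zero_comp, comp_zero]
    exact F.map_zero _ _)

/-- The cohomology `Hʲ(F(P_•))` of the cochain complex `F(P₀) → F(P₁) → ⋯` at `F(Pⱼ)`:
`H 0` is the kernel of `F(P₀) → F(P₁)` and `H (j+1) = Z (j+1) / im F(Pⱼ)`. -/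
noncomputable def H : ℕ → AddCommGrpCat.{w}
  | 0 => Z F D 0
  | (j + 1) => cokernel (l F D j)

/-- The kernel inclusion `K 0 = ker(F(B) → F(P₀)) ⟶ F(B)`. -/
noncomputable def ι0 : K F D 0 ⟶ F.obj (op (D.S 0)) := kernel.ι (F.map (D.p 0).op)

/-- The canonical map `F(B) ⟶ H⁰(F(P_•))`. -/
noncomputable def r0 : F.obj (op (D.S 0)) ⟶ H F D 0 := s F D 0

/-- The canonical map `Z j ⟶ K (j+1) = ker(F(Ωʲ⁺¹B) → F(Pⱼ₊₁))`, induced by the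
monomorphism `Ωʲ⁺¹ B ↪ Pⱼ`. -/
noncomputable def toK (j : ℕ) : Z F D j ⟶ K F D (j + 1) :=
  kernel.lift _ (kernel.ι (F.map (D.d j).op) ≫ F.map (D.m j).op) (by
    erw [Category.assoc, ← F.map_comp]
    exact kernel.condition _)

/-- The connecting map `Hʲ(F(P_•)) ⟶ ker(F(Ωʲ⁺¹B) → F(Pⱼ₊₁))`. -/
noncomputable def conn : ∀ j, H F D j ⟶ K F D (j + 1)
  | 0 => toK F D 0
  | (j + 1) => cokernel.desc (l F D j) (toK F D (j + 1)) (by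
      apply (cancel_mono (kernel.ι (F.map (D.p (j + 2)).op))).1
      erw [Category.assoc, zero_comp]
      show l F D j ≫ toK F D (j + 1) ≫ kernel.ι _ = 0
      erw [toK, kernel.lift_ι, l, ← Category.assoc, kernel.lift_ι, ← F.map_comp]
      show F.map (((D.m (j + 1) ≫ D.p (j + 1)) ≫ D.m j).op) = 0
      erw [D.wmp (j + 1), zero_comp]
      exact F.map_zero _ _)

/-- The canonical map `ker(F(Ωʲ⁺¹B) → F(Pⱼ₊₁)) ⟶ coker(F(Pⱼ) → F(Ωʲ⁺¹B))`. -/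
noncomputable def q (j : ℕ) : K F D (j + 1) ⟶ Cok F D j :=
  kernel.ι (F.map (D.p (j + 1)).op) ≫ cokernel.π (F.map (D.m j).op)

lemma comp_s (j : ℕ) : F.map (D.m j).op ≫ s F D (j + 1) = l F D j := by
  apply (cancel_mono (kernel.ι (F.map (D.d (j + 1)).op))).1
  erw [Category.assoc, s, kernel.lift_ι, l, kernel.lift_ι, ← F.map_comp]
  rfl

/-- The canonical map `coker(F(Pⱼ) → F(Ωʲ⁺¹B)) ⟶ Hʲ⁺¹(F(P_•))`. -/
noncomputable def toH (j : ℕ) : Cok F D j ⟶ H F D (j + 1) :=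
  cokernel.desc (F.map (D.m j).op) (s F D (j + 1) ≫ cokernel.π (l F D j)) (by
    erw [← Category.assoc, comp_s, cokernel.condition]; rfl)

lemma w₁ : ι0 F D ≫ r0 F D = 0 := by
  apply (cancel_mono (kernel.ι (F.map (D.d 0).op))).1
  erw [Category.assoc, zero_comp]
  show ι0 F D ≫ s F D 0 ≫ kernel.ι _ = 0
  erw [s, kernel.lift_ι, ι0, kernel.condition]
  rfl

lemma w₂ : r0 F D ≫ conn F D 0 = 0 := by
  apply (cancel_mono (kernel.ι (F.map (D.p 1).op))).1
  erw [Category.assoc, zero_comp]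
  show s F D 0 ≫ toK F D 0 ≫ kernel.ι _ = 0
  erw [toK, kernel.lift_ι, ← Category.assoc, s, kernel.lift_ι, ← F.map_comp, ← op_comp,
    D.wmp 0]
  exact F.map_zero _ _

lemma toK_comp_q (j : ℕ) : toK F D j ≫ q F D j = 0 := by
  erw [q, ← Category.assoc, toK, kernel.lift_ι, Category.assoc, cokernel.condition, comp_zero]

lemma w₃ : ∀ j, conn F D j ≫ q F D j = 0
  | 0 => toK_comp_q F D 0
  | (j + 1) => by
      apply (cancel_epi (cokernel.π (l F D j))).1
      erw [comp_zero, ← Category.assoc]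
      show (cokernel.π _ ≫ cokernel.desc _ _ _) ≫ q F D (j + 1) = 0
      erw [cokernel.π_desc, toK_comp_q]

lemma w₄ (j : ℕ) : q F D j ≫ toH F D j = 0 := by
  erw [q, Category.assoc, toH, cokernel.π_desc, ← Category.assoc]
  have h : kernel.ι (F.map (D.p (j + 1)).op) ≫ s F D (j + 1) = 0 := by
    apply (cancel_mono (kernel.ι (F.map (D.d (j + 1)).op))).1
    erw [Category.assoc, s, kernel.lift_ι, kernel.condition, zero_comp]
  erw [h, zero_comp]

lemma w₅ (j : ℕ) : toH F D j ≫ conn F D (j + 1) = 0 := by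
  apply (cancel_epi (cokernel.π (F.map (D.m j).op))).1
  erw [comp_zero, ← Category.assoc, toH, cokernel.π_desc, Category.assoc]
  show s F D (j + 1) ≫ cokernel.π _ ≫ cokernel.desc _ _ _ = 0
  erw [cokernel.π_desc]
  apply (cancel_mono (kernel.ι (F.map (D.p (j + 2)).op))).1
  erw [Category.assoc, zero_comp]
  show s F D (j + 1) ≫ toK F D (j + 1) ≫ kernel.ι _ = 0
  erw [toK, kernel.lift_ι, ← Category.assoc, s, kernel.lift_ι, ← F.map_comp, ← op_comp,
    D.wmp (j + 1)]
  exact F.map_zero _ _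


section ElementHelpers

variable {A' B' : AddCommGrpCat.{w}} (f : A' ⟶ B')

lemma hom_congr {A' B' : AddCommGrpCat.{w}} {f g : A' ⟶ B'} (h : f = g) (x : A') : f x = g x := by
  rw [h]

lemma kι_inj : Function.Injective (kernel.ι f) :=
  (AddCommGrpCat.mono_iff_injective _).1 inferInstance

lemma kι_exists (a : A') (h : f a = 0) : ∃ k, kernel.ι f k = a :=
  ((ShortComplex.ab_exact_iff _).1 (ShortComplex.exact_kernel f)) a h

lemma kι_apply_zero (k : (kernel f : AddCommGrpCat.{w})) : f (kernel.ι f k) = 0 := by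
  rw [← comp_apply, kernel.condition]; rfl

lemma cπ_surj : Function.Surjective (cokernel.π f) :=
  (AddCommGrpCat.epi_iff_surjective _).1 inferInstance

lemma cπ_exists (b : B') (h : cokernel.π f b = 0) : ∃ a, f a = b :=
  ((ShortComplex.ab_exact_iff _).1 (ShortComplex.exact_cokernel f)) b h

lemma cπ_apply_zero (a : A') : cokernel.π f (f a) = 0 := by
  rw [← comp_apply, cokernel.condition]; rfl

end ElementHelpers

/-- **The right fundamental sequence of a half-exact contravariant functor (computed with a
projective resolution) is exact.**
Let `F` be an additive half-exact contravariant functor from `R`-modules to abelian groups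
and `⋯ → P₁ → P₀ → B → 0` a projective resolution of `B = S 0` with syzygies `Ωʲ B = S j`.
Then the long sequence
`0 → ker(F(B) → F(P₀)) → F(B) → H⁰(F(P_•)) → ker(F(ΩB) → F(P₁)) → coker(F(P₀) → F(ΩB)) →`
`H¹(F(P_•)) → ker(F(Ω²B) → F(P₂)) → coker(F(P₁) → F(Ω²B)) → H²(F(P_•)) → ⋯`,
with all maps the canonically induced ones, is exact. -/
theorem contra_right_fundamental_sequence_exact
    (hhalf : ∀ ⦃X Y Z : ModuleCat.{v} R⦄ (f : X ⟶ Y) (g : Y ⟶ Z) (w : f ≫ g = 0),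
      (ShortComplex.mk f g w).ShortExact →
      (ShortComplex.mk (F.map g.op) (F.map f.op)
        (by rw [← F.map_comp, ← op_comp, w]; exact F.map_zero _ _)).Exact)
    (hproj : ∀ j, Projective (D.P j))
    (hres : ∀ j, (ShortComplex.mk (D.m j) (D.p j) (D.wmp j)).ShortExact) :
    Mono (ι0 F D) ∧
    (ShortComplex.mk _ _ (w₁ F D)).Exact ∧
    (ShortComplex.mk _ _ (w₂ F D)).Exact ∧
    (∀ j, (ShortComplex.mk _ _ (w₃ F D j)).Exact) ∧
    (∀ j, (ShortComplex.mk _ _ (w₄ F D j)).Exact) ∧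
    (∀ j, (ShortComplex.mk _ _ (w₅ F D j)).Exact) := by
  have hEe : ∀ (j : ℕ) (y : F.obj (op (D.P j))), F.map (D.m j).op y = 0 →
      ∃ x, F.map (D.p j).op x = y := fun j =>
    (ShortComplex.ab_exact_iff _).1 (hhalf (D.m j) (D.p j) (D.wmp j) (hres j))
  have hsι : ∀ (j : ℕ) (x : F.obj (op (D.S j))),
      kernel.ι (F.map (D.d j).op) (s F D j x) = F.map (D.p j).op x := by
    intro j x
    have h : s F D j ≫ kernel.ι (F.map (D.d j).op) = F.map (D.p j).op := by
      erw [s, kernel.lift_ι]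
    exact hom_congr h x
  have htι : ∀ (j : ℕ) (z : (Z F D j : AddCommGrpCat.{w})),
      kernel.ι (F.map (D.p (j + 1)).op) (toK F D j z)
        = F.map (D.m j).op (kernel.ι (F.map (D.d j).op) z) := by
    intro j z
    have h : toK F D j ≫ kernel.ι (F.map (D.p (j + 1)).op)
        = kernel.ι (F.map (D.d j).op) ≫ F.map (D.m j).op := by
      erw [toK, kernel.lift_ι]; rfl
    exact hom_congr h z
  have hconnS : ∀ (j : ℕ) (z : (Z F D (j + 1) : AddCommGrpCat.{w})),
      conn F D (j + 1) (cokernel.π (l F D j) z) = toK F D (j + 1) z := by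
    intro j z
    have h : cokernel.π (l F D j) ≫ conn F D (j + 1) = toK F D (j + 1) := by
      show cokernel.π (l F D j) ≫ cokernel.desc _ _ _ = _
      erw [cokernel.π_desc]
    exact hom_congr h z
  have htoH : ∀ (j : ℕ) (x : F.obj (op (D.S (j + 1)))),
      toH F D j (cokernel.π (F.map (D.m j).op) x)
        = cokernel.π (l F D j) (s F D (j + 1) x) := by
    intro j x
    have h : cokernel.π (F.map (D.m j).op) ≫ toH F D j
        = s F D (j + 1) ≫ cokernel.π (l F D j) := by
      rw [toH, cokernel.π_desc]; rfl
    exact hom_congr h x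
  have hq : ∀ (j : ℕ) (k : (K F D (j + 1) : AddCommGrpCat.{w})),
      q F D j k = cokernel.π (F.map (D.m j).op) (kernel.ι (F.map (D.p (j + 1)).op) k) := by
    intro j k
    have h : q F D j = kernel.ι (F.map (D.p (j + 1)).op) ≫ cokernel.π (F.map (D.m j).op) :=
      rfl
    rw [h]; rfl
  have hls : ∀ (j : ℕ) (y : F.obj (op (D.P j))),
      s F D (j + 1) (F.map (D.m j).op y) = l F D j y := by
    intro j y
    simpa using hom_congr (comp_s F D j) y
  have hK : ∀ (j : ℕ) (k : (K F D (j + 1) : AddCommGrpCat.{w})), q F D j k = 0 →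
      ∃ z : (Z F D j : AddCommGrpCat.{w}), toK F D j z = k := by
    intro j k hk
    rw [hq] at hk
    obtain ⟨y, hy⟩ := cπ_exists _ _ hk
    have hdy : F.map (D.d j).op y = 0 := by
      have hd : F.map (D.d j).op = F.map (D.m j).op ≫ F.map (D.p (j + 1)).op := by
        rw [SyzygyData.d, op_comp, F.map_comp]
      rw [hd, comp_apply, hy]
      exact kι_apply_zero _ k
    obtain ⟨z, hz⟩ := kι_exists _ y hdy
    refine ⟨z, kι_inj _ ?_⟩
    erw [htι, hz, hy]
  refine ⟨?_, ?_, ?_, ?_, ?_, ?_⟩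
  · exact inferInstanceAs (Mono (kernel.ι (F.map (D.p 0).op)))
  · rw [ShortComplex.ab_exact_iff]
    intro x hx
    have hs : s F D 0 x = 0 := hx
    have h0 : F.map (D.p 0).op x = 0 := by
      erw [← hsι 0 x, hs, map_zero]
    obtain ⟨k, hk⟩ := kι_exists _ x h0
    exact ⟨k, hk⟩
  · rw [ShortComplex.ab_exact_iff]
    intro z hz
    have hz' : toK F D 0 z = 0 := hz
    have hm : F.map (D.m 0).op (kernel.ι (F.map (D.d 0).op) z) = 0 := by
      erw [← htι 0 z, hz', map_zero]
    obtain ⟨x, hx⟩ := hEe 0 _ hm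
    refine ⟨x, kι_inj (F.map (D.d 0).op) ?_⟩
    show kernel.ι (F.map (D.d 0).op) (s F D 0 x) = kernel.ι (F.map (D.d 0).op) z
    rw [hsι 0 x, hx]
  · rintro (_ | j)
    · rw [ShortComplex.ab_exact_iff]
      intro k hk
      have hk' : q F D 0 k = 0 := hk
      obtain ⟨z, hz⟩ := hK 0 k hk'
      exact ⟨z, hz⟩
    · rw [ShortComplex.ab_exact_iff]
      intro k hk
      have hk' : q F D (j + 1) k = 0 := hk
      obtain ⟨z, hz⟩ := hK (j + 1) k hk'
      refine ⟨cokernel.π (l F D j) z, ?_⟩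
      show conn F D (j + 1) (cokernel.π (l F D j) z) = k
      rw [hconnS, hz]
  · intro j
    rw [ShortComplex.ab_exact_iff]
    intro c hc
    obtain ⟨x, rfl⟩ := cπ_surj (F.map (D.m j).op) c
    have hc2 : toH F D j (cokernel.π (F.map (D.m j).op) x) = 0 := hc
    rw [htoH] at hc2
    obtain ⟨y, hy⟩ := cπ_exists _ _ hc2
    have hx' : F.map (D.p (j + 1)).op (x - F.map (D.m j).op y) = 0 := by
      erw [← hsι (j + 1), map_sub, hls j y, hy, sub_self, map_zero]
    obtain ⟨k, hk⟩ := kι_exists _ _ hx'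
    refine ⟨k, ?_⟩
    show q F D j k = cokernel.π (F.map (D.m j).op) x
    erw [hq, hk, map_sub, cπ_apply_zero, sub_zero]
  · intro j
    rw [ShortComplex.ab_exact_iff]
    intro h hh
    obtain ⟨z, rfl⟩ := cπ_surj (l F D j) h
    have hz : toK F D (j + 1) z = 0 := by
      rw [← hconnS j z]; exact hh
    have hm : F.map (D.m (j + 1)).op (kernel.ι (F.map (D.d (j + 1)).op) z) = 0 := by
      erw [← htι (j + 1) z, hz, map_zero]
    obtain ⟨x, hx⟩ := hEe (j + 1) _ hm
    have hsx : s F D (j + 1) x = z := kι_inj _ (by rw [hsι, hx])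
    refine ⟨cokernel.π (F.map (D.m j).op) x, ?_⟩
    show toH F D j (cokernel.π (F.map (D.m j).op) x) = cokernel.π (l F D j) z
    rw [htoH, hsx]


end ContraRightFundamentalSeq
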